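/- For all nonzero reals f, p with f ≠ p and all Q ∈ ℝ, setting d = f-p, the point (Q/(pd)-p/d, fQ/(pd)-fp/d, Q/d - fp/d, Q/(fd)-p/d, pQ/(fd)-fp/d) lies in D; that is, the F₁-line F₁(f,p) parametrized by Q is contained in D. -/

import Mathlib

theorem F1_line_in_D (f p Q : ℝ) (hf : f ≠ 0) (hp : p ≠ 0) (hfp : f ≠ p) :
    let d := f - p
    let v := Q / (p * d) - p / d
    let b := f * Q / (p * d) - f * p / d
    let r := Q / d - f * p / d
    let k := Q / (f * d) - p / d
    let l := p * Q / (f * d) - f * p / d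
    v * r = b * k ∧ r * (k - 1) = l * (v - 1) := by
  intro d v b r k l
  have hd : d ≠ 0 := sub_ne_zero.mpr hfp
  constructor <;> · show _ = _; simp only [v, b, r, k, l, d]; field_simp [sub_ne_zero.mpr hfp, hfp] <;> ring
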